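/- (Sub-Gaussianity of the posterior) Let X be a real-valued random variable, N a standard Gaussian random variable independent of X, a ≠ 0, and Y = aX + N. For every y ∈ ℝ let X_y be a random variable distributed according to the regular conditional distribution of X given Y = y. Then X_y is sub-Gaussian for every y ∈ ℝ; more precisely, for all x > 0, P(|X_y| ≥ x) ≤ √(2/π) · (e^{y²/2} / h₀(y; a)) · e^{−a²x²/4}; for every n = 1, 2, …, E[|X_y|ⁿ] ≤ (n · e^{y²/2} / h₀(y; a)) · (√2/|a|)ⁿ · √((n−1)!); and E[|X_y − E[X_y]|ⁿ] ≤ 2ⁿ · E[|X_y|ⁿ]. -/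

import Mathlib

open MeasureTheory ProbabilityTheory Real
open scoped ENNReal NNReal

/-- The standard Gaussian density `φ(t) = (2π)^{-1/2} e^{-t²/2}`. -/
noncomputable def stdGaussPdf (t : ℝ) : ℝ := Real.exp (-(t ^ 2) / 2) / Real.sqrt (2 * Real.pi)

/-- `h₀(y; a) = E[φ(y - aX)]`, the density of `Y = aX + N` at `y`,
where `ν` is the law of `X`. -/
noncomputable def h0 (ν : Measure ℝ) (y a : ℝ) : ℝ := ∫ x, stdGaussPdf (y - a * x) ∂ν

/-- The posterior distribution of `X` given `Y = aX + N = y`, where `ν` is the (prior) law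
of `X`: it has density `φ(y - a x) / h₀(y; a)` with respect to `ν`. -/
noncomputable def posterior (ν : Measure ℝ) (y a : ℝ) : Measure ℝ :=
  (ENNReal.ofReal (h0 ν y a))⁻¹ •
    ν.withDensity (fun x => ENNReal.ofReal (stdGaussPdf (y - a * x)))

lemma stdGaussPdf_pos (t : ℝ) : 0 < stdGaussPdf t := by
  unfold stdGaussPdf; positivity

lemma stdGaussPdf_cont : Continuous stdGaussPdf := by
  unfold stdGaussPdf; fun_prop

lemma stdGaussPdf_le (t : ℝ) : stdGaussPdf t ≤ 1 / Real.sqrt (2 * Real.pi) := by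
  unfold stdGaussPdf
  gcongr
  exact Real.exp_le_one_iff.mpr (by nlinarith [sq_nonneg t])

lemma stdGaussPdf_le_bound (y a t : ℝ) :
    stdGaussPdf (y - a * t) ≤
      Real.exp (y ^ 2 / 2) * Real.exp (-(a ^ 2 * t ^ 2) / 4) / Real.sqrt (2 * Real.pi) := by
  unfold stdGaussPdf
  gcongr
  rw [← Real.exp_add]
  exact Real.exp_le_exp.mpr (by nlinarith [sq_nonneg (y - a * t / 2)])

lemma rpow_mul_exp_le {m : ℝ} (hm : 0 < m) {s : ℝ} (hs : 0 ≤ s) :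
    s ^ m * Real.exp (-s) ≤ m ^ m * Real.exp (-m) := by
  rcases eq_or_lt_of_le hs with h | h
  · rw [← h, Real.zero_rpow hm.ne', zero_mul]
    positivity
  · have h1 : s / m ≤ Real.exp (s / m - 1) := by
      have := Real.add_one_le_exp (s / m - 1); linarith
    have h2 : (s / m) ^ m ≤ Real.exp (s / m - 1) ^ m :=
      Real.rpow_le_rpow (by positivity) h1 hm.le
    rw [← Real.exp_mul] at h2
    have h3 : (s / m - 1) * m = s - m := by field_simp
    rw [h3] at h2
    have h4 : s ^ m = (s / m) ^ m * m ^ m := by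
      rw [← Real.mul_rpow (by positivity) hm.le, div_mul_cancel₀ _ hm.ne']
    rw [h4]
    calc (s / m) ^ m * m ^ m * Real.exp (-s)
        ≤ Real.exp (s - m) * m ^ m * Real.exp (-s) := by
          have hmm : (0:ℝ) ≤ m ^ m := by positivity
          have he : (0:ℝ) < Real.exp (-s) := Real.exp_pos _
          nlinarith [mul_le_mul_of_nonneg_right h2 hmm]
      _ = m ^ m * Real.exp (-m) := by
          rw [mul_assoc, mul_comm (m ^ m), ← mul_assoc, ← Real.exp_add]
          ring_nf

lemma abs_pow_mul_exp_le {a : ℝ} (ha : a ≠ 0) (n : ℕ) (t : ℝ) :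
    |t| ^ n * Real.exp (-(a ^ 2 * t ^ 2) / 4) ≤
      (Real.sqrt 2 / |a|) ^ n * Real.sqrt n ^ n * Real.exp (-(n : ℝ) / 2) := by
  rcases Nat.eq_zero_or_pos n with hn | hn
  · subst hn
    simp [Real.exp_le_one_iff.mpr
      (by nlinarith [sq_nonneg (a * t)] : -(a ^ 2 * t ^ 2) / 4 ≤ 0)]
  have hapos : 0 < |a| := abs_pos.mpr ha
  set s : ℝ := a ^ 2 * t ^ 2 / 4 with hsdef
  have hs : 0 ≤ s := by positivity
  have hts : |t| = 2 / |a| * Real.sqrt s := by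
    rw [hsdef, show a ^ 2 * t ^ 2 / 4 = (a * t / 2) ^ 2 by ring, Real.sqrt_sq_eq_abs]
    rw [abs_div, abs_mul]
    field_simp
    ring
  have hm : (0:ℝ) < (n : ℝ) / 2 := by positivity
  have hsq : ∀ u : ℝ, 0 ≤ u → Real.sqrt u ^ n = u ^ ((n : ℝ) / 2) := by
    intro u hu
    rw [Real.sqrt_eq_rpow, ← Real.rpow_natCast (u ^ ((1:ℝ)/2)) n, ← Real.rpow_mul hu]
    congr 1; ring
  have key : Real.sqrt s ^ n * Real.exp (-s) ≤
      Real.sqrt ((n : ℝ) / 2) ^ n * Real.exp (-((n : ℝ) / 2)) := by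
    rw [hsq s hs, hsq _ hm.le]
    exact rpow_mul_exp_le hm hs
  have h5 : 2 / |a| * Real.sqrt ((n:ℝ)/2) = Real.sqrt 2 / |a| * Real.sqrt (n:ℝ) := by
    rw [div_mul_eq_mul_div, div_mul_eq_mul_div]
    congr 1
    rw [← Real.sqrt_mul (by norm_num : (0:ℝ) ≤ 2)]
    rw [show (2:ℝ) * (n:ℝ) = 4 * ((n:ℝ)/2) by ring,
      Real.sqrt_mul (by norm_num : (0:ℝ) ≤ 4),
      show Real.sqrt 4 = 2 by
        rw [show (4:ℝ) = 2 ^ 2 by norm_num]; exact Real.sqrt_sq (by norm_num)]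
  have hexp : -(a ^ 2 * t ^ 2) / 4 = -s := by rw [hsdef]; ring
  rw [hts, hexp]
  calc (2 / |a| * Real.sqrt s) ^ n * Real.exp (-s)
      = (2 / |a|) ^ n * (Real.sqrt s ^ n * Real.exp (-s)) := by rw [mul_pow]; ring
    _ ≤ (2 / |a|) ^ n * (Real.sqrt ((n:ℝ)/2) ^ n * Real.exp (-((n:ℝ)/2))) :=
        mul_le_mul_of_nonneg_left key (by positivity)
    _ = (Real.sqrt 2 / |a|) ^ n * Real.sqrt (n:ℝ) ^ n * Real.exp (-(n:ℝ)/2) := by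
        rw [← mul_assoc, ← mul_pow, ← mul_pow, h5, neg_div]

lemma pow_le_factorial_mul_exp (n : ℕ) : (n : ℝ) ^ n ≤ (Nat.factorial n : ℝ) * Real.exp n := by
  induction n with
  | zero => simp
  | succ n ih =>
    have key : ((n : ℝ) + 1) ^ n ≤ (n : ℝ) ^ n * Real.exp 1 := by
      rcases Nat.eq_zero_or_pos n with h | h
      · subst h; simpa using Real.one_le_exp (by norm_num)
      · have hn : (0:ℝ) < n := by exact_mod_cast h
        have h1 : (n : ℝ) + 1 ≤ (n : ℝ) * Real.exp (1 / n) := by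
          have := Real.add_one_le_exp (1 / (n:ℝ))
          have h2 := mul_le_mul_of_nonneg_left this hn.le
          calc (n:ℝ) + 1 = (n:ℝ) * (1/(n:ℝ) + 1) := by field_simp; ring
            _ ≤ (n:ℝ) * Real.exp (1/(n:ℝ)) := h2
        calc ((n:ℝ) + 1) ^ n ≤ ((n:ℝ) * Real.exp (1/(n:ℝ))) ^ n := by
              gcongr
          _ = (n:ℝ) ^ n * Real.exp (1/(n:ℝ)) ^ n := mul_pow _ _ _
          _ = (n:ℝ) ^ n * Real.exp ((n:ℝ) * (1/(n:ℝ))) := by rw [Real.exp_nat_mul]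
          _ = (n:ℝ) ^ n * Real.exp 1 := by rw [mul_one_div, div_self hn.ne']
    have hf : (0:ℝ) < (Nat.factorial n : ℝ) := by exact_mod_cast Nat.factorial_pos n
    push_cast
    calc ((n:ℝ) + 1) ^ (n + 1) = ((n:ℝ) + 1) * ((n:ℝ) + 1) ^ n := by
          ring
      _ ≤ ((n:ℝ) + 1) * ((n:ℝ) ^ n * Real.exp 1) := by
          apply mul_le_mul_of_nonneg_left key (by positivity)
      _ ≤ ((n:ℝ) + 1) * ((Nat.factorial n : ℝ) * Real.exp n * Real.exp 1) := by
          apply mul_le_mul_of_nonneg_left _ (by positivity)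
          exact mul_le_mul_of_nonneg_right ih (Real.exp_pos 1).le
      _ = (Nat.factorial (n + 1) : ℝ) * Real.exp (n + 1) := by
          rw [Nat.factorial_succ, Real.exp_add]
          push_cast; ring

lemma sqrtn_bound {n : ℕ} (hn : 1 ≤ n) :
    Real.sqrt n ^ n * Real.exp (-(n : ℝ) / 2) ≤
      Real.sqrt (2 * Real.pi) * ((n : ℝ) * Real.sqrt (Nat.factorial (n - 1))) := by
  have hnpos : (0:ℝ) < n := by exact_mod_cast hn
  have hL : (0:ℝ) ≤ Real.sqrt n ^ n * Real.exp (-(n:ℝ)/2) := by positivity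
  have hR : (0:ℝ) ≤ Real.sqrt (2 * Real.pi) * ((n : ℝ) * Real.sqrt (Nat.factorial (n - 1))) := by
    positivity
  have hsq : (Real.sqrt n ^ n * Real.exp (-(n:ℝ)/2)) ^ 2 ≤
      (Real.sqrt (2 * Real.pi) * ((n : ℝ) * Real.sqrt (Nat.factorial (n - 1)))) ^ 2 := by
    have e1 : (Real.sqrt n ^ n * Real.exp (-(n:ℝ)/2)) ^ 2 = (n:ℝ) ^ n * Real.exp (-(n:ℝ)) := by
      rw [mul_pow, ← pow_mul, mul_comm n 2, pow_mul, Real.sq_sqrt hnpos.le,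
        ← Real.exp_nat_mul]
      congr 1
      push_cast
      ring
    have e2 : (Real.sqrt (2 * Real.pi) * ((n : ℝ) * Real.sqrt (Nat.factorial (n - 1)))) ^ 2 =
        2 * Real.pi * ((n:ℝ) * ((n:ℝ) * (Nat.factorial (n - 1) : ℝ))) := by
      rw [mul_pow, mul_pow, Real.sq_sqrt (by positivity : (0:ℝ) ≤ 2 * Real.pi),
        Real.sq_sqrt (by positivity : (0:ℝ) ≤ (Nat.factorial (n-1) : ℝ))]
      ring
    rw [e1, e2]
    have hfact : (n:ℝ) * (Nat.factorial (n-1) : ℝ) = (Nat.factorial n : ℝ) := by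
      rcases Nat.exists_eq_add_of_le hn with ⟨k, rfl⟩
      simp [Nat.add_comm 1 k, Nat.factorial_succ]
    rw [hfact]
    have h1 : (n:ℝ) ^ n * Real.exp (-(n:ℝ)) ≤ (Nat.factorial n : ℝ) := by
      have h2 := pow_le_factorial_mul_exp n
      have h3 : (0:ℝ) < Real.exp (n:ℝ) := Real.exp_pos _
      rw [Real.exp_neg]
      rw [mul_inv_le_iff₀ h3]
      exact h2
    have h4 : (Nat.factorial n : ℝ) ≤ 2 * Real.pi * ((n:ℝ) * (Nat.factorial n : ℝ)) := by
      have hn1 : (1:ℝ) ≤ n := by exact_mod_cast hn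
      have hpi : (1:ℝ) ≤ 2 * Real.pi * n := by
        nlinarith [Real.pi_gt_three]
      nlinarith [show (0:ℝ) < (Nat.factorial n : ℝ) by exact_mod_cast Nat.factorial_pos n]
    linarith
  calc Real.sqrt n ^ n * Real.exp (-(n:ℝ)/2)
      = Real.sqrt ((Real.sqrt n ^ n * Real.exp (-(n:ℝ)/2)) ^ 2) := (Real.sqrt_sq hL).symm
    _ ≤ Real.sqrt ((Real.sqrt (2 * Real.pi) * ((n : ℝ) * Real.sqrt (Nat.factorial (n - 1)))) ^ 2) :=
        Real.sqrt_le_sqrt hsq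
    _ = _ := Real.sqrt_sq hR

section MeasureLemmas

variable (ν : Measure ℝ) [IsProbabilityMeasure ν] (y a : ℝ)

lemma integrable_stdGaussPdf : Integrable (fun x => stdGaussPdf (y - a * x)) ν := by
  apply Integrable.mono' (integrable_const (1 / Real.sqrt (2 * Real.pi)))
  · exact (stdGaussPdf_cont.comp (by fun_prop)).aestronglyMeasurable
  · filter_upwards with x
    rw [Real.norm_eq_abs, abs_of_pos (stdGaussPdf_pos _)]
    exact stdGaussPdf_le _

lemma h0_pos : 0 < h0 ν y a := by
  rw [h0, integral_pos_iff_support_of_nonneg_ae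
    (Filter.Eventually.of_forall fun x => (stdGaussPdf_pos _).le) (integrable_stdGaussPdf ν y a)]
  have hs : Function.support (fun x => stdGaussPdf (y - a * x)) = Set.univ := by
    ext x; simp [Function.mem_support, (stdGaussPdf_pos _).ne']
  rw [hs]
  simp

lemma lintegral_stdGaussPdf :
    ∫⁻ x, ENNReal.ofReal (stdGaussPdf (y - a * x)) ∂ν = ENNReal.ofReal (h0 ν y a) :=
  (ofReal_integral_eq_lintegral_ofReal (integrable_stdGaussPdf ν y a)
    (Filter.Eventually.of_forall fun x => (stdGaussPdf_pos _).le)).symm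

lemma posterior_isProb : IsProbabilityMeasure (posterior ν y a) := by
  constructor
  rw [_root_.posterior, Measure.smul_apply, withDensity_apply _ MeasurableSet.univ,
    Measure.restrict_univ, lintegral_stdGaussPdf ν y a, smul_eq_mul]
  exact ENNReal.inv_mul_cancel
    (ENNReal.ofReal_pos.mpr (h0_pos ν y a)).ne' ENNReal.ofReal_ne_top

lemma integral_posterior (g : ℝ → ℝ) :
    ∫ t, g t ∂(posterior ν y a) = (h0 ν y a)⁻¹ * ∫ t, stdGaussPdf (y - a * t) * g t ∂ν := by
  rw [_root_.posterior, integral_smul_measure, ENNReal.toReal_inv,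
    ENNReal.toReal_ofReal (h0_pos ν y a).le, smul_eq_mul]
  congr 1
  have hrw : (fun x => ENNReal.ofReal (stdGaussPdf (y - a * x))) =
      (fun x => ((stdGaussPdf (y - a * x)).toNNReal : ℝ≥0∞)) := rfl
  have hmeas : Measurable fun x : ℝ => (stdGaussPdf (y - a * x)).toNNReal :=
    ((stdGaussPdf_cont.comp (by fun_prop : Continuous fun x : ℝ => y - a * x)).measurable).real_toNNReal
  rw [hrw, integral_withDensity_eq_integral_smul hmeas g]
  congr 1
  ext t
  simp [NNReal.smul_def, Real.coe_toNNReal _ (stdGaussPdf_pos _).le]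

lemma integrable_abs_pow_posterior (ha : a ≠ 0) (n : ℕ) :
    Integrable (fun t => |t| ^ n) (posterior ν y a) := by
  have h0p := h0_pos ν y a
  rw [_root_.posterior, integrable_smul_measure
    (ENNReal.inv_ne_zero.mpr ENNReal.ofReal_ne_top)
    (ENNReal.inv_ne_top.mpr (ENNReal.ofReal_pos.mpr h0p).ne')]
  have hmeas : Measurable fun x : ℝ => ENNReal.ofReal (stdGaussPdf (y - a * x)) :=
    ((stdGaussPdf_cont.comp (by fun_prop : Continuous fun x : ℝ => y - a * x)).measurable).ennreal_ofReal
  rw [integrable_withDensity_iff hmeas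
    (Filter.Eventually.of_forall fun x => ENNReal.ofReal_lt_top)]
  have heq : ∀ t : ℝ, |t| ^ n * (ENNReal.ofReal (stdGaussPdf (y - a * t))).toReal =
      |t| ^ n * stdGaussPdf (y - a * t) := by
    intro t; rw [ENNReal.toReal_ofReal (stdGaussPdf_pos _).le]
  simp only [heq]
  set K : ℝ := Real.exp (y ^ 2 / 2) / Real.sqrt (2 * Real.pi) *
      ((Real.sqrt 2 / |a|) ^ n * Real.sqrt n ^ n * Real.exp (-(n : ℝ) / 2)) with hK
  apply Integrable.mono' (integrable_const K)
  · exact ((continuous_abs.pow n).mul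
      (stdGaussPdf_cont.comp (by fun_prop : Continuous fun x : ℝ => y - a * x))).aestronglyMeasurable
  · filter_upwards with t
    rw [Real.norm_eq_abs, abs_of_nonneg (mul_nonneg (by positivity) (stdGaussPdf_pos _).le)]
    calc |t| ^ n * stdGaussPdf (y - a * t)
        ≤ |t| ^ n * (Real.exp (y ^ 2 / 2) * Real.exp (-(a ^ 2 * t ^ 2) / 4) / Real.sqrt (2 * Real.pi)) := by
          exact mul_le_mul_of_nonneg_left (stdGaussPdf_le_bound y a t) (by positivity)
      _ = Real.exp (y ^ 2 / 2) / Real.sqrt (2 * Real.pi) * (|t| ^ n * Real.exp (-(a ^ 2 * t ^ 2) / 4)) := by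
          ring
      _ ≤ K := by
          rw [hK]
          exact mul_le_mul_of_nonneg_left (abs_pow_mul_exp_le ha n t) (by positivity)

end MeasureLemmas


/-- **Sub-Gaussianity of the posterior.** -/
theorem posterior_subGaussian {Ω : Type*} [MeasurableSpace Ω] (μ : Measure Ω)
    [IsProbabilityMeasure μ] (X N : Ω → ℝ) (hXm : Measurable X) (hNm : Measurable N)
    (hN : Measure.map N μ = gaussianReal 0 1) (hindep : IndepFun X N μ)
    (a : ℝ) (ha : a ≠ 0) (y : ℝ) :
    -- `X_y` is sub-Gaussian
    (∃ c C : ℝ, 0 < c ∧ 0 < C ∧ ∀ lam : ℝ, 0 < lam →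
        posterior (Measure.map X μ) y a {x | lam < |x|}
          ≤ ENNReal.ofReal (C * Real.exp (-c * lam ^ 2))) ∧
    -- quantitative tail bound
    (∀ x : ℝ, 0 < x →
        posterior (Measure.map X μ) y a {t | x ≤ |t|}
          ≤ ENNReal.ofReal (Real.sqrt (2 / Real.pi) * (Real.exp (y ^ 2 / 2) /
              h0 (Measure.map X μ) y a) * Real.exp (-(a ^ 2 * x ^ 2) / 4))) ∧
    -- moment bound
    (∀ n : ℕ, 1 ≤ n →
        ∫ t, |t| ^ n ∂(posterior (Measure.map X μ) y a)
          ≤ n * Real.exp (y ^ 2 / 2) / h0 (Measure.map X μ) y a *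
              (Real.sqrt 2 / |a|) ^ n * Real.sqrt (Nat.factorial (n - 1))) ∧
    -- central moment bound
    (∀ n : ℕ, 1 ≤ n →
        ∫ t, |t - ∫ s, s ∂(posterior (Measure.map X μ) y a)| ^ n
            ∂(posterior (Measure.map X μ) y a)
          ≤ 2 ^ n * ∫ t, |t| ^ n ∂(posterior (Measure.map X μ) y a)) := by
  set ν := Measure.map X μ with hνdef
  haveI : IsProbabilityMeasure ν := Measure.isProbabilityMeasure_map hXm.aemeasurable
  haveI : IsProbabilityMeasure (posterior ν y a) := posterior_isProb ν y a
  have hh0 : 0 < h0 ν y a := h0_pos ν y a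
  have ha2 : (0:ℝ) < a ^ 2 := lt_of_le_of_ne (sq_nonneg a) (Ne.symm (pow_ne_zero 2 ha))
  -- tail bound
  have tail : ∀ x : ℝ, 0 < x →
      posterior ν y a {t | x ≤ |t|} ≤ ENNReal.ofReal (Real.sqrt (2 / Real.pi) *
        (Real.exp (y ^ 2 / 2) / h0 ν y a) * Real.exp (-(a ^ 2 * x ^ 2) / 4)) := by
    intro x hx
    have hS : MeasurableSet {t : ℝ | x ≤ |t|} :=
      measurableSet_le measurable_const continuous_abs.measurable
    rw [_root_.posterior, Measure.smul_apply, withDensity_apply _ hS, smul_eq_mul]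
    set c1 : ℝ := Real.exp (y ^ 2 / 2) * Real.exp (-(a ^ 2 * x ^ 2) / 4) /
      Real.sqrt (2 * Real.pi) with hc1
    have hb : ∫⁻ t in {t : ℝ | x ≤ |t|}, ENNReal.ofReal (stdGaussPdf (y - a * t)) ∂ν
        ≤ ENNReal.ofReal c1 := by
      have hmono : ∫⁻ t in {t : ℝ | x ≤ |t|}, ENNReal.ofReal (stdGaussPdf (y - a * t)) ∂ν
          ≤ ∫⁻ _ in {t : ℝ | x ≤ |t|}, ENNReal.ofReal c1 ∂ν := by
        apply setLIntegral_mono measurable_const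
        intro t ht
        apply ENNReal.ofReal_le_ofReal
        calc stdGaussPdf (y - a * t)
            ≤ Real.exp (y ^ 2 / 2) * Real.exp (-(a ^ 2 * t ^ 2) / 4) / Real.sqrt (2 * Real.pi) :=
              stdGaussPdf_le_bound y a t
          _ ≤ c1 := by
              rw [hc1]
              have ht' : x ≤ |t| := ht
              have hsq : x ^ 2 ≤ t ^ 2 := by nlinarith [sq_abs t]
              have hAB : Real.exp (-(a ^ 2 * t ^ 2) / 4) ≤ Real.exp (-(a ^ 2 * x ^ 2) / 4) :=
                Real.exp_le_exp.mpr (by nlinarith)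
              rw [div_le_div_iff_of_pos_right (Real.sqrt_pos.mpr Real.two_pi_pos)]
              exact mul_le_mul_of_nonneg_left hAB (Real.exp_pos _).le
      calc _ ≤ _ := hmono
        _ = ENNReal.ofReal c1 * ν {t : ℝ | x ≤ |t|} := setLIntegral_const _ _
        _ ≤ ENNReal.ofReal c1 * 1 := mul_le_mul_right prob_le_one _
        _ = ENNReal.ofReal c1 := mul_one _
    calc (ENNReal.ofReal (h0 ν y a))⁻¹ *
          ∫⁻ t in {t : ℝ | x ≤ |t|}, ENNReal.ofReal (stdGaussPdf (y - a * t)) ∂ν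
        ≤ (ENNReal.ofReal (h0 ν y a))⁻¹ * ENNReal.ofReal c1 := mul_le_mul_right hb _
      _ ≤ ENNReal.ofReal (Real.sqrt (2 / Real.pi) * (Real.exp (y ^ 2 / 2) / h0 ν y a) *
            Real.exp (-(a ^ 2 * x ^ 2) / 4)) := by
          rw [← ENNReal.ofReal_inv_of_pos hh0, ← ENNReal.ofReal_mul (by positivity)]
          apply ENNReal.ofReal_le_ofReal
          have h1 : 1 / Real.sqrt (2 * Real.pi) ≤ Real.sqrt (2 / Real.pi) := by
            rw [div_le_iff₀ (Real.sqrt_pos.mpr Real.two_pi_pos)]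
            rw [← Real.sqrt_mul (by positivity)]
            rw [show 2 / Real.pi * (2 * Real.pi) = 4 by field_simp; ring]
            rw [show (4:ℝ) = 2 ^ 2 by norm_num, Real.sqrt_sq (by norm_num)]
            norm_num
          have h2 : (h0 ν y a)⁻¹ * c1 = 1 / Real.sqrt (2 * Real.pi) *
              ((Real.exp (y ^ 2 / 2) / h0 ν y a) * Real.exp (-(a ^ 2 * x ^ 2) / 4)) := by
            rw [hc1]; ring
          rw [h2]
          calc 1 / Real.sqrt (2 * Real.pi) *
                ((Real.exp (y ^ 2 / 2) / h0 ν y a) * Real.exp (-(a ^ 2 * x ^ 2) / 4))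
              ≤ Real.sqrt (2 / Real.pi) *
                ((Real.exp (y ^ 2 / 2) / h0 ν y a) * Real.exp (-(a ^ 2 * x ^ 2) / 4)) := by
                apply mul_le_mul_of_nonneg_right h1
                exact mul_nonneg (div_nonneg (Real.exp_pos _).le hh0.le) (Real.exp_pos _).le
            _ = _ := by ring
  refine ⟨⟨a ^ 2 / 4, Real.sqrt (2 / Real.pi) * (Real.exp (y ^ 2 / 2) / h0 ν y a),
      by positivity, mul_pos (Real.sqrt_pos.mpr (by positivity)) (div_pos (Real.exp_pos _) hh0),
      fun lam hlam => ?_⟩, tail, fun n hn => ?_, fun n hn => ?_⟩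
  · -- sub-Gaussian from tail
    calc posterior ν y a {x | lam < |x|}
        ≤ posterior ν y a {t | lam ≤ |t|} := measure_mono (Set.setOf_subset_setOf.mpr fun t ht => le_of_lt ht)
      _ ≤ ENNReal.ofReal (Real.sqrt (2 / Real.pi) * (Real.exp (y ^ 2 / 2) / h0 ν y a) *
            Real.exp (-(a ^ 2 * lam ^ 2) / 4)) := tail lam hlam
      _ = ENNReal.ofReal (Real.sqrt (2 / Real.pi) * (Real.exp (y ^ 2 / 2) / h0 ν y a) *
            Real.exp (-(a ^ 2 / 4) * lam ^ 2)) := by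
          rw [show -(a ^ 2 / 4) * lam ^ 2 = -(a ^ 2 * lam ^ 2) / 4 by ring]
  · -- moment bound
    rw [integral_posterior ν y a (fun t => |t| ^ n)]
    set K : ℝ := Real.exp (y ^ 2 / 2) / Real.sqrt (2 * Real.pi) *
        ((Real.sqrt 2 / |a|) ^ n * Real.sqrt n ^ n * Real.exp (-(n : ℝ) / 2)) with hK
    have hptw : ∀ t : ℝ, stdGaussPdf (y - a * t) * |t| ^ n ≤ K := by
      intro t
      calc stdGaussPdf (y - a * t) * |t| ^ n
            ≤ Real.exp (y ^ 2 / 2) * Real.exp (-(a ^ 2 * t ^ 2) / 4) / Real.sqrt (2 * Real.pi)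
                * |t| ^ n :=
              mul_le_mul_of_nonneg_right (stdGaussPdf_le_bound y a t) (by positivity)
          _ = Real.exp (y ^ 2 / 2) / Real.sqrt (2 * Real.pi) *
                (|t| ^ n * Real.exp (-(a ^ 2 * t ^ 2) / 4)) := by ring
          _ ≤ K := by
              rw [hK]
              exact mul_le_mul_of_nonneg_left (abs_pow_mul_exp_le ha n t) (by positivity)
    have hb : ∫ t, stdGaussPdf (y - a * t) * |t| ^ n ∂ν ≤ K := by
      calc ∫ t, stdGaussPdf (y - a * t) * |t| ^ n ∂ν
          ≤ ∫ _, K ∂ν := integral_mono_of_nonneg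
            (Filter.Eventually.of_forall fun t =>
              mul_nonneg (stdGaussPdf_pos _).le (by positivity : (0:ℝ) ≤ |t| ^ n))
            (integrable_const K) (Filter.Eventually.of_forall hptw)
        _ = K := by simp
    have hmid : Real.sqrt n ^ n * Real.exp (-(n : ℝ) / 2) / Real.sqrt (2 * Real.pi)
        ≤ (n : ℝ) * Real.sqrt (Nat.factorial (n - 1)) := by
      rw [div_le_iff₀ (Real.sqrt_pos.mpr Real.two_pi_pos)]
      calc Real.sqrt n ^ n * Real.exp (-(n : ℝ) / 2)
          ≤ Real.sqrt (2 * Real.pi) * ((n : ℝ) * Real.sqrt (Nat.factorial (n - 1))) :=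
            sqrtn_bound hn
        _ = (n : ℝ) * Real.sqrt (Nat.factorial (n - 1)) * Real.sqrt (2 * Real.pi) := by ring
    have hfac : (0:ℝ) ≤ Real.exp (y ^ 2 / 2) / h0 ν y a * (Real.sqrt 2 / |a|) ^ n :=
      mul_nonneg (div_nonneg (Real.exp_pos _).le hh0.le) (by positivity)
    calc (h0 ν y a)⁻¹ * ∫ t, stdGaussPdf (y - a * t) * |t| ^ n ∂ν
        ≤ (h0 ν y a)⁻¹ * K := mul_le_mul_of_nonneg_left hb (inv_nonneg.mpr hh0.le)
      _ = Real.exp (y ^ 2 / 2) / h0 ν y a * (Real.sqrt 2 / |a|) ^ n *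
            (Real.sqrt n ^ n * Real.exp (-(n : ℝ) / 2) / Real.sqrt (2 * Real.pi)) := by
          rw [hK]; ring
      _ ≤ Real.exp (y ^ 2 / 2) / h0 ν y a * (Real.sqrt 2 / |a|) ^ n *
            ((n : ℝ) * Real.sqrt (Nat.factorial (n - 1))) :=
          mul_le_mul_of_nonneg_left hmid hfac
      _ = (n : ℝ) * Real.exp (y ^ 2 / 2) / h0 ν y a * (Real.sqrt 2 / |a|) ^ n *
            Real.sqrt (Nat.factorial (n - 1)) := by ring
  · -- central moment bound
    set P := posterior ν y a with hP
    set m : ℝ := ∫ s, s ∂P with hm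
    have hint : ∀ k : ℕ, Integrable (fun t => |t| ^ k) P :=
      fun k => integrable_abs_pow_posterior ν y a ha k
    have h1 : |m| ≤ ∫ s, |s| ∂P := by
      have := norm_integral_le_integral_norm (μ := P) (fun s : ℝ => s)
      simpa [Real.norm_eq_abs] using this
    have h2 : (∫ s, |s| ∂P) ^ n ≤ ∫ s, |s| ^ n ∂P := by
      have := (convexOn_pow (𝕜 := ℝ) n).map_integral_le
        (continuousOn_pow n) isClosed_Ici
        (Filter.Eventually.of_forall fun s : ℝ => Set.mem_Ici.mpr (abs_nonneg s))
        (by simpa using hint 1)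
        (by exact hint n)
      simpa using this
    have h3 : |m| ^ n ≤ ∫ s, |s| ^ n ∂P :=
      le_trans (pow_le_pow_left₀ (abs_nonneg m) h1 n) h2
    have hpt : ∀ t : ℝ, |t - m| ^ n ≤ 2 ^ n * ((|t| ^ n + |m| ^ n) / 2) := by
      intro t
      have htri : |t - m| ≤ |t| + |m| := by
        calc |t - m| = |t + -m| := by ring_nf
          _ ≤ |t| + |-m| := abs_add_le _ _
          _ = |t| + |m| := by rw [abs_neg]
      have hconv := (convexOn_pow (𝕜 := ℝ) n).2 (Set.mem_Ici.mpr (abs_nonneg t))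
        (Set.mem_Ici.mpr (abs_nonneg m)) (by norm_num : (0:ℝ) ≤ 1/2)
        (by norm_num : (0:ℝ) ≤ 1/2) (by norm_num)
      simp only [smul_eq_mul] at hconv
      calc |t - m| ^ n ≤ (|t| + |m|) ^ n :=
            pow_le_pow_left₀ (abs_nonneg _) htri n
        _ = 2 ^ n * ((1/2) * |t| + (1/2) * |m|) ^ n := by
            rw [← mul_pow]; ring_nf
        _ ≤ 2 ^ n * ((1/2) * |t| ^ n + (1/2) * |m| ^ n) :=
            mul_le_mul_of_nonneg_left hconv (by positivity)
        _ = 2 ^ n * ((|t| ^ n + |m| ^ n) / 2) := by ring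
    have hRint : Integrable (fun t : ℝ => 2 ^ n * ((|t| ^ n + |m| ^ n) / 2)) P := by
      exact (((hint n).add (integrable_const (|m| ^ n))).div_const 2).const_mul _
    calc ∫ t, |t - m| ^ n ∂P
        ≤ ∫ t, 2 ^ n * ((|t| ^ n + |m| ^ n) / 2) ∂P :=
          integral_mono_of_nonneg (Filter.Eventually.of_forall fun t => by positivity)
            hRint (Filter.Eventually.of_forall hpt)
      _ = 2 ^ n * ((∫ t, |t| ^ n ∂P + |m| ^ n) / 2) := by
          rw [integral_const_mul, integral_div, integral_add (hint n) (integrable_const _),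
            integral_const]
          simp
      _ ≤ 2 ^ n * ∫ t, |t| ^ n ∂P := by
          have h2n : (0:ℝ) < 2 ^ n := by positivity
          nlinarith [h3]
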